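/- Let R be a commutative ring and r ∈ R. Then the localization R[r^{-1}] (the localization of R at the multiplicative set of powers of r), viewed as an R-module, has projective dimension at most 1. -/
import Mathlib

open CategoryTheory

open Polynomial in
private lemma crx_sub_one_mul_left_cancel (R : Type) [CommRing R] (r : R)
    (p : R[X]) (hp : p * (C r * X - 1) = 0) : p = 0 := by
  have h : p = p * C r * X := by linear_combination -hp
  have hc : ∀ n, p.coeff n = 0 := by
    intro n
    induction n with
    | zero =>
      have : p.coeff 0 = (p * C r * X).coeff 0 := by rw [← h]
      simpa using this
    | succ n ih =>
      have : p.coeff (n + 1) = (p * C r * X).coeff (n + 1) := by rw [← h]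
      rw [Polynomial.coeff_mul_X, Polynomial.coeff_mul_C, ih, zero_mul] at this
      exact this
  ext n
  simpa using hc n

open Polynomial in
private lemma mul_crx_sub_one_inj (R : Type) [CommRing R] (r : R) :
    Function.Injective (fun p : R[X] => p * (C r * X - 1)) := by
  intro p q hpq
  have h0 : (p - q) * (C r * X - 1) = 0 := by
    simp only at hpq
    rw [sub_mul, hpq, sub_self]
  have := crx_sub_one_mul_left_cancel R r _ h0
  exact sub_eq_zero.mp this

/-- For a commutative ring `R` and `r ∈ R`, the localization `R[r⁻¹]`
has projective dimension at most 1 as an `R`-module: there is a short exact sequence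
`0 ⟶ Q ⟶ P ⟶ R[r⁻¹] ⟶ 0` with `P`, `Q` projective `R`-modules. -/
theorem projectiveDimension_le_one_of_localization_away
    (R : Type) [CommRing R] (r : R) :
    ∃ (P Q : ModuleCat R) (f : Q ⟶ P) (g : P ⟶ ModuleCat.of R (Localization.Away r)),
      Projective P ∧ Projective Q ∧
        Function.Injective f ∧ Function.Surjective g ∧ Function.Exact f g := by
  classical
  open Polynomial in
  refine ⟨ModuleCat.of R R[X], ModuleCat.of R R[X],
    ModuleCat.ofHom (LinearMap.mulRight R (C r * X - 1)),
    ModuleCat.ofHom ((Localization.awayEquivAdjoin r).symm.toLinearMap ∘ₗ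
      (Ideal.Quotient.mkₐ R (Ideal.span {C r * X - 1})).toLinearMap),
    ModuleCat.projective_of_free (Polynomial.basisMonomials R),
    ModuleCat.projective_of_free (Polynomial.basisMonomials R),
    ?_, ?_, ?_⟩
  · exact mul_crx_sub_one_inj R r
  · intro x
    obtain ⟨p, hp⟩ := AdjoinRoot.mk_surjective ((Localization.awayEquivAdjoin r) x)
    refine ⟨p, ?_⟩
    show (Localization.awayEquivAdjoin r).symm (AdjoinRoot.mk _ p) = x
    rw [hp, AlgEquiv.symm_apply_apply]
  · intro p
    constructor
    · intro hgp
      have h1 : (Localization.awayEquivAdjoin r).symm (AdjoinRoot.mk (C r * X - 1) p) = 0 := hgp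
      have h0 : AdjoinRoot.mk (C r * X - 1) p = 0 := by
        apply (Localization.awayEquivAdjoin r).symm.injective
        rw [h1, map_zero]
      rw [AdjoinRoot.mk_eq_zero] at h0
      obtain ⟨q, hq⟩ := h0
      refine ⟨q, ?_⟩
      show q * (C r * X - 1) = p
      rw [hq]; exact mul_comm q (C r * X - 1)
    · rintro ⟨q, rfl⟩
      show (Localization.awayEquivAdjoin r).symm
        (AdjoinRoot.mk (C r * X - 1) ((show R[X] from q) * (C r * X - 1))) = 0
      rw [map_mul, AdjoinRoot.mk_self, mul_zero, map_zero]
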